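/- Let A be a finite set with at least 2 elements, let R be a finite set of local rules on A all of radius r, and let θ : ℤ → R be a distribution. The induced map H_θ : C_A → C_A is surjective if and only if for all integers i ≤ j the partial transition function h_{θ_{[i,j]}} : A^{(j-i+1)+2r} → A^{j-i+1} is surjective. -/

import Mathlib

/-- The r-ν-CA `H_θ` induced by a distribution `θ` over a finite set `R`
of local rules of radius `r` is surjective iff all its partial transition functions
`h_{θ_{[i,j]}}` are surjective. Here `R` is a finite type indexing the rules and
`rule ρ` is the local rule of radius `r` associated to `ρ ∈ R`; surjectivity of the
partial transition function `h_{θ_{[i,j]}} : A^{(j-i+1)+2r} → A^{j-i+1}` is expressed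
as: every word `u` on `[i,j]` is the image of (the relevant window `[i-r, j+r]` of)
some configuration `w`. -/
theorem stmt4 {A : Type*} [Fintype A] (hA : 2 ≤ Fintype.card A) (r : ℕ)
    {R : Type*} [Fintype R] (rule : R → (Fin (2 * r + 1) → A) → A) (θ : ℤ → R) :
    Function.Surjective
        (fun x : ℤ → A => fun i : ℤ => rule (θ i) (fun k => x (i - (r : ℤ) + (k : ℕ))))
    ↔ ∀ i j : ℤ, i ≤ j → ∀ u : ℤ → A, ∃ w : ℤ → A,
        ∀ m : ℤ, i ≤ m → m ≤ j →
          rule (θ m) (fun k => w (m - (r : ℤ) + (k : ℕ))) = u m := by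
  constructor
  · intro hs i j hij u
    obtain ⟨x, hx⟩ := hs u
    exact ⟨x, fun m _ _ => congrFun hx m⟩
  · intro h u
    letI : TopologicalSpace A := ⊥
    haveI : DiscreteTopology A := ⟨rfl⟩
    set F : ℤ → (ℤ → A) → A :=
      fun m w => rule (θ m) (fun k => w (m - (r : ℤ) + (k : ℕ))) with hF
    have hFcont : ∀ m, Continuous (F m) := by
      intro m
      have hEq : F m = (fun v : Fin (2 * r + 1) → A => rule (θ m) v) ∘
          (fun w : ℤ → A => fun k : Fin (2 * r + 1) => w (m - (r : ℤ) + (k : ℕ))) := rfl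
      rw [hEq]
      exact Continuous.comp continuous_of_discreteTopology
        (continuous_pi fun k => continuous_apply _)
    set V : ℕ → Set (ℤ → A) :=
      fun n => {w | ∀ m : ℤ, -(n : ℤ) ≤ m → m ≤ (n : ℤ) → F m w = u m} with hV
    have hVclosed : ∀ n, IsClosed (V n) := by
      intro n
      have hEq : V n = ⋂ m ∈ {m : ℤ | -(n : ℤ) ≤ m ∧ m ≤ (n : ℤ)}, {w | F m w = u m} := by
        ext w
        simp only [hV, Set.mem_setOf_eq, Set.mem_iInter]
        tauto
      rw [hEq]
      exact isClosed_biInter fun m _ => isClosed_eq (hFcont m) continuous_const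
    have hVne : ∀ n, (V n).Nonempty := by
      intro n
      obtain ⟨w, hw⟩ := h (-(n : ℤ)) (n : ℤ) (by omega) u
      exact ⟨w, fun m h1 h2 => hw m h1 h2⟩
    have hVsub : ∀ n, V (n + 1) ⊆ V n := by
      intro n w hw m h1 h2
      exact hw m (by push_cast; omega) (by push_cast; omega)
    have hcomp : IsCompact (V 0) := (hVclosed 0).isCompact
    obtain ⟨w, hw⟩ := IsCompact.nonempty_iInter_of_sequence_nonempty_isCompact_isClosed
      V hVsub hVne hcomp hVclosed
    refine ⟨w, funext fun i => ?_⟩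
    have hmem := Set.mem_iInter.mp hw i.natAbs
    exact hmem i (by omega) (by omega)
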